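/- Let φ : V → ℝ be a potential vector on the vertices of a finite directed graph, and let d : V → ℝ be a demand with Σ_v d(v) = 0. Suppose M > 0 satisfies |φ(v)| < M for all v. Then Σ_v d(v)·φ(v) = ∫_{-M}^{M} Δ(V_{>x}) dx, where V_{>x} = {v : φ(v) > x} and Δ(S) = Σ_{v ∈ S} d(v). -/

import Mathlib

open MeasureTheory

lemma indic_ii (a c M : ℝ) (h1 : -M < c) (h2 : c < M) :
    ∫ x in (-M)..M, (if x < c then a else 0) = a * (c + M) := by
  have hle : (-M : ℝ) ≤ M := by linarith
  have heq : (fun x : ℝ => if x < c then a else 0)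
      = Set.indicator (Set.Iio c) (fun _ => a) := by
    funext x
    by_cases h : x < c <;> simp [Set.indicator, Set.mem_Iio, h]
  rw [intervalIntegral.integral_of_le hle, heq,
    MeasureTheory.setIntegral_indicator measurableSet_Iio]
  have hset : Set.Ioc (-M) M ∩ Set.Iio c = Set.Ioo (-M) c := by
    ext x
    constructor
    · rintro ⟨⟨hx1, _⟩, hx2⟩; exact ⟨hx1, hx2⟩
    · rintro ⟨hx1, hx2⟩; exact ⟨⟨hx1, by linarith⟩, hx2⟩
  rw [hset, setIntegral_const, measureReal_def, Real.volume_Ioo, smul_eq_mul,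
    ENNReal.toReal_ofReal (by linarith)]
  ring

lemma intInt (a c M : ℝ) :
    IntervalIntegrable (fun x : ℝ => if x < c then a else 0) volume (-M) M := by
  have heq : (fun x : ℝ => if x < c then a else 0)
      = Set.indicator (Set.Iio c) (fun _ => a) := by
    funext x
    by_cases h : x < c <;> simp [Set.indicator, Set.mem_Iio, h]
  rw [heq, intervalIntegrable_iff]
  exact (integrableOn_const measure_Ioc_lt_top.ne).indicator measurableSet_Iio

/-- Coarea identity for demands and potentials. -/
theorem stmt_1 {V : Type*} [Fintype V] (d φ : V → ℝ) (M : ℝ) (hM : 0 < M)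
    (hd : ∑ v, d v = 0) (hφ : ∀ v, |φ v| < M) :
    ∑ v, d v * φ v =
      ∫ x in (-M)..M, ∑ v ∈ Finset.univ.filter (fun v => x < φ v), d v := by
  have hsum : ∀ x : ℝ, ∑ v ∈ Finset.univ.filter (fun v => x < φ v), d v
      = ∑ v : V, (if x < φ v then d v else 0) := by
    intro x; rw [Finset.sum_filter]
  simp_rw [hsum]
  rw [intervalIntegral.integral_finset_sum (fun v _ => intInt (d v) (φ v) M)]
  have hv : ∀ v : V, (∫ x in (-M)..M, (if x < φ v then d v else 0))
      = d v * (φ v + M) := by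
    intro v
    have h := abs_lt.1 (hφ v)
    exact indic_ii (d v) (φ v) M h.1 h.2
  simp_rw [hv, mul_add, Finset.sum_add_distrib, ← Finset.sum_mul, hd]
  ring
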